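/- Let p : [0,1] → ℝ be nonnegative, integrable, symmetric about 1/2 (p(1-t) = p(t)), and non-decreasing on [0,1/2]. Then for every convex function f : [0,1] → ℝ, ∫₀¹ p(t)·f(t) dt ≤ (∫₀¹ p(t) dt)·(∫₀¹ f(t) dt). -/

import Mathlib

open MeasureTheory Set intervalIntegral

theorem levin_steckin (p f : ℝ → ℝ)
    (hp0 : ∀ t ∈ Icc (0:ℝ) 1, 0 ≤ p t)
    (hpint : IntervalIntegrable p volume 0 1)
    (hpsym : ∀ t ∈ Icc (0:ℝ) 1, p (1 - t) = p t)
    (hpmono : MonotoneOn p (Icc (0:ℝ) (1 / 2)))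
    (hf : ConvexOn ℝ (Icc (0:ℝ) 1) f)
    (hfint : IntervalIntegrable f volume 0 1)
    (hpfint : IntervalIntegrable (fun t => p t * f t) volume 0 1) :
    (∫ t in (0:ℝ)..1, p t * f t) ≤
      (∫ t in (0:ℝ)..1, p t) * (∫ t in (0:ℝ)..1, f t) := by
  set P : ℝ := ∫ t in (0:ℝ)..1, p t with hPdef
  set g : ℝ → ℝ := fun t => (f t + f (1 - t)) / 2 with hgdef
  have hgsym : ∀ t : ℝ, g (1 - t) = g t := by
    intro t; simp only [hgdef, sub_sub_cancel]; ring
  -- g is antitone on [0, 1/2]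
  have hganti : AntitoneOn g (Icc (0:ℝ) (1/2)) := by
    intro x hx y hy hxy
    rcases eq_or_lt_of_le hx.2 with hx2 | hx2
    · have : y = x := le_antisymm (by rw [hx2]; exact hy.2) hxy
      rw [this]
    · have hx01 : x ∈ Icc (0:ℝ) 1 := ⟨hx.1, by linarith [hx.2]⟩
      have h1x01 : (1 - x) ∈ Icc (0:ℝ) 1 := ⟨by linarith [hx.2], by linarith [hx.1]⟩
      set a : ℝ := (1 - x - y) / (1 - 2*x) with ha
      set b : ℝ := (y - x) / (1 - 2*x) with hb
      have hden : (0:ℝ) < 1 - 2*x := by linarith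
      have ha0 : 0 ≤ a := div_nonneg (by linarith [hy.2]) hden.le
      have hb0 : 0 ≤ b := div_nonneg (by linarith) hden.le
      have hab : a + b = 1 := by
        rw [ha, hb, ← add_div, div_eq_one_iff_eq hden.ne']; ring
      have hcomb1 : a • x + b • (1 - x) = y := by
        simp only [smul_eq_mul, ha, hb]
        rw [div_mul_eq_mul_div, div_mul_eq_mul_div, ← add_div, div_eq_iff hden.ne']; ring
      have hcomb2 : a • (1 - x) + b • x = 1 - y := by
        simp only [smul_eq_mul, ha, hb]
        rw [div_mul_eq_mul_div, div_mul_eq_mul_div, ← add_div, div_eq_iff hden.ne']; ring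
      have h1 := hf.2 hx01 h1x01 ha0 hb0 hab
      rw [hcomb1] at h1
      have h2 := hf.2 h1x01 hx01 ha0 hb0 hab
      rw [hcomb2] at h2
      simp only [smul_eq_mul] at h1 h2
      simp only [hgdef]
      have key : a * f x + b * f (1 - x) + (a * f (1 - x) + b * f x)
          = f x + f (1 - x) := by linear_combination (f x + f (1 - x)) * hab
      linarith [h1, h2, key]
  -- basic integrabilities
  have hsub01 : uIcc (0:ℝ) (1/2) ⊆ uIcc (0:ℝ) 1 := by
    rw [uIcc_of_le (by norm_num : (0:ℝ) ≤ 1/2), uIcc_of_le (by norm_num : (0:ℝ) ≤ 1)]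
    exact Icc_subset_Icc le_rfl (by norm_num)
  have hf1 : IntervalIntegrable (fun t => f (1 - t)) volume 0 1 := by
    simpa using (hfint.comp_sub_left 1).symm
  have hpf1' : IntervalIntegrable (fun t => p (1 - t) * f (1 - t)) volume 0 1 := by
    simpa using (hpfint.comp_sub_left 1).symm
  have hpf1 : IntervalIntegrable (fun t => p t * f (1 - t)) volume 0 1 := by
    rw [intervalIntegrable_iff] at hpf1' ⊢
    apply hpf1'.congr_fun _ measurableSet_uIoc
    intro x hx
    rw [uIoc_of_le (by norm_num : (0:ℝ) ≤ 1)] at hx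
    show p (1 - x) * f (1 - x) = p x * f (1 - x)
    rw [hpsym x ⟨hx.1.le, hx.2⟩]
  have hqf : IntervalIntegrable (fun t => (p t - P) * f t) volume 0 1 := by
    have h := hpfint.sub (hfint.const_mul P)
    convert h using 1; funext t; ring
  have hqf1 : IntervalIntegrable (fun t => (p t - P) * f (1 - t)) volume 0 1 := by
    have h := hpf1.sub (hf1.const_mul P)
    convert h using 1; funext t; ring
  have hqg : IntervalIntegrable (fun t => (p t - P) * g t) volume 0 1 := by
    have h := (hqf.add hqf1).div_const 2
    convert h using 1; funext t; simp only [hgdef]; ring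
  have hq : IntervalIntegrable (fun t => p t - P) volume 0 1 :=
    hpint.sub intervalIntegrable_const
  -- ∫₀^{1/2} p = P/2
  have hhalf : (∫ t in (0:ℝ)..(1/2), p t) = P / 2 := by
    have hadd : (∫ t in (0:ℝ)..(1/2), p t) + (∫ t in (1/2:ℝ)..1, p t) = P :=
      integral_add_adjacent_intervals (hpint.mono_set hsub01)
        (hpint.mono_set (by rw [uIcc_of_le (by norm_num : (1/2:ℝ) ≤ 1),
          uIcc_of_le (by norm_num : (0:ℝ) ≤ 1)]; exact Icc_subset_Icc (by norm_num) le_rfl))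
    have hsub : (∫ t in (0:ℝ)..(1/2), p (1 - t)) = ∫ t in (1/2:ℝ)..1, p t := by
      have h := integral_comp_sub_left p 1 (a := 0) (b := 1/2)
      convert h using 2 <;> norm_num
    have hcong : (∫ t in (0:ℝ)..(1/2), p (1 - t)) = ∫ t in (0:ℝ)..(1/2), p t := by
      apply integral_congr
      intro t ht
      rw [uIcc_of_le (by norm_num : (0:ℝ) ≤ 1/2)] at ht
      exact hpsym t ⟨ht.1, by linarith [ht.2]⟩
    rw [hcong] at hsub
    linarith
  -- ∫₀¹ (p-P) f = ∫ p f - P ∫ f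
  have hI1 : (∫ t in (0:ℝ)..1, (p t - P) * f t)
      = (∫ t in (0:ℝ)..1, p t * f t) - P * (∫ t in (0:ℝ)..1, f t) := by
    have : (fun t => (p t - P) * f t) = fun t => p t * f t - P * f t := by
      funext t; ring
    rw [this, integral_sub hpfint (hfint.const_mul P), intervalIntegral.integral_const_mul]
  -- ∫₀¹ (p-P) f(1-·) = ∫₀¹ (p-P) f
  have hI2 : (∫ t in (0:ℝ)..1, (p t - P) * f (1 - t))
      = ∫ t in (0:ℝ)..1, (p t - P) * f t := by
    have e1 : (fun t => (p t - P) * f (1 - t)) = fun t => p t * f (1 - t) - P * f (1 - t) := by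
      funext t; ring
    have e2 : (∫ t in (0:ℝ)..1, p t * f (1 - t)) = ∫ t in (0:ℝ)..1, p t * f t := by
      have hc : (∫ t in (0:ℝ)..1, p t * f (1 - t))
          = ∫ t in (0:ℝ)..1, p (1 - t) * f (1 - t) := by
        apply integral_congr
        intro t ht
        rw [uIcc_of_le (by norm_num : (0:ℝ) ≤ 1)] at ht
        show p t * f (1 - t) = p (1 - t) * f (1 - t)
        rw [hpsym t ht]
      rw [hc]
      simpa using integral_comp_sub_left (fun t => p t * f t) 1 (a := 0) (b := 1)
    have e3 : (∫ t in (0:ℝ)..1, f (1 - t)) = ∫ t in (0:ℝ)..1, f t := by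
      simpa using integral_comp_sub_left f 1 (a := 0) (b := 1)
    rw [e1, integral_sub hpf1 (hf1.const_mul P), intervalIntegral.integral_const_mul, e2, e3, hI1]
  -- ∫₀¹ (p-P) g = ∫₀¹ (p-P) f
  have hIg : (∫ t in (0:ℝ)..1, (p t - P) * g t) = ∫ t in (0:ℝ)..1, (p t - P) * f t := by
    have e : (fun t => (p t - P) * g t)
        = fun t => ((p t - P) * f t + (p t - P) * f (1 - t)) / 2 := by
      funext t; simp only [hgdef]; ring
    rw [e, intervalIntegral.integral_div, integral_add hqf hqf1, hI2]
    ring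
  -- ∫₀¹ (p-P) g = 2 ∫₀^{1/2} (p-P) g
  have hIg2 : (∫ t in (0:ℝ)..1, (p t - P) * g t)
      = 2 * ∫ t in (0:ℝ)..(1/2), (p t - P) * g t := by
    have hadd : (∫ t in (0:ℝ)..(1/2), (p t - P) * g t)
        + (∫ t in (1/2:ℝ)..1, (p t - P) * g t) = ∫ t in (0:ℝ)..1, (p t - P) * g t :=
      integral_add_adjacent_intervals (hqg.mono_set hsub01)
        (hqg.mono_set (by rw [uIcc_of_le (by norm_num : (1/2:ℝ) ≤ 1),
          uIcc_of_le (by norm_num : (0:ℝ) ≤ 1)]; exact Icc_subset_Icc (by norm_num) le_rfl))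
    have hsub : (∫ t in (0:ℝ)..(1/2), (p (1 - t) - P) * g (1 - t))
        = ∫ t in (1/2:ℝ)..1, (p t - P) * g t := by
      have h := integral_comp_sub_left (fun t => (p t - P) * g t) 1 (a := 0) (b := 1/2)
      convert h using 2 <;> norm_num
    have hcong : (∫ t in (0:ℝ)..(1/2), (p (1 - t) - P) * g (1 - t))
        = ∫ t in (0:ℝ)..(1/2), (p t - P) * g t := by
      apply integral_congr
      intro t ht
      rw [uIcc_of_le (by norm_num : (0:ℝ) ≤ 1/2)] at ht
      show (p (1 - t) - P) * g (1 - t) = (p t - P) * g t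
      rw [hpsym t ⟨ht.1, by linarith [ht.2]⟩, hgsym]
    rw [hcong] at hsub
    linarith
  -- choose the crossing point c
  set S : Set ℝ := Icc (0:ℝ) (1/2) ∩ {t | p t ≤ P} with hSdef
  have hp0P : p 0 ≤ P := by
    have hmono : ∀ t ∈ Icc (0:ℝ) (1/2), p 0 ≤ p t := fun t ht =>
      hpmono (by constructor <;> norm_num) ht ht.1
    have hle : (∫ _t in (0:ℝ)..(1/2), p 0) ≤ ∫ t in (0:ℝ)..(1/2), p t :=
      integral_mono_on (by norm_num) intervalIntegrable_const (hpint.mono_set hsub01) hmono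
    rw [intervalIntegral.integral_const, hhalf] at hle
    simp only [smul_eq_mul] at hle
    linarith
  have h0S : (0:ℝ) ∈ S := ⟨by constructor <;> norm_num, hp0P⟩
  have hSbdd : BddAbove S := ⟨1/2, fun x hx => hx.1.2⟩
  set c : ℝ := sSup S with hcdef
  have hc0 : 0 ≤ c := le_csSup hSbdd h0S
  have hc2 : c ≤ 1/2 := csSup_le ⟨0, h0S⟩ fun x hx => hx.1.2
  have hcI : c ∈ Icc (0:ℝ) (1/2) := ⟨hc0, hc2⟩
  have hlt : ∀ t ∈ Icc (0:ℝ) (1/2), t < c → p t ≤ P := by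
    intro t ht htc
    obtain ⟨s, hsS, hts⟩ := exists_lt_of_lt_csSup ⟨0, h0S⟩ htc
    exact le_trans (hpmono ht hsS.1 hts.le) hsS.2
  have hgt : ∀ t ∈ Icc (0:ℝ) (1/2), c < t → P ≤ p t := by
    intro t ht hct
    by_contra h
    push_neg at h
    exact absurd (le_csSup hSbdd ⟨ht, h.le⟩) (not_le.mpr hct)
  -- pointwise inequality on [0,1/2]
  have hpt : ∀ t ∈ Icc (0:ℝ) (1/2), (p t - P) * g t ≤ g c * (p t - P) := by
    intro t ht
    rcases lt_trichotomy t c with h | h | h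
    · have h1 : p t - P ≤ 0 := sub_nonpos.mpr (hlt t ht h)
      have h2 : g c ≤ g t := hganti ht hcI h.le
      nlinarith
    · rw [h]; ring_nf; exact le_refl _
    · have h1 : 0 ≤ p t - P := sub_nonneg.mpr (hgt t ht h)
      have h2 : g t ≤ g c := hganti hcI ht h.le
      nlinarith
  -- the integral on [0,1/2] is ≤ 0
  have hqhalf : (∫ t in (0:ℝ)..(1/2), (p t - P)) = 0 := by
    rw [integral_sub (hpint.mono_set hsub01) intervalIntegrable_const, hhalf,
      intervalIntegral.integral_const]
    simp
    ring
  have hfinal : (∫ t in (0:ℝ)..(1/2), (p t - P) * g t) ≤ 0 := by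
    have hle : (∫ t in (0:ℝ)..(1/2), (p t - P) * g t)
        ≤ ∫ t in (0:ℝ)..(1/2), g c * (p t - P) :=
      integral_mono_on (by norm_num) (hqg.mono_set hsub01)
        ((hq.mono_set hsub01).const_mul (g c)) hpt
    rw [intervalIntegral.integral_const_mul, hqhalf, mul_zero] at hle
    exact hle
  have : (∫ t in (0:ℝ)..1, p t * f t) - P * (∫ t in (0:ℝ)..1, f t) ≤ 0 := by
    rw [← hI1, ← hIg, hIg2]
    linarith
  linarith
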